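/- Let P_X be an m_X × n matrix and P_Z an m_Z × n matrix over 𝔽₂ with P_X · P_Zᵀ = 0. Let H₀ = ker(P_X)/im(P_Zᵀ) and H₀* = ker(P_Z)/im(P_Xᵀ), where P_X, P_Z are viewed as linear maps 𝔽₂ⁿ → 𝔽₂^{m_X}, 𝔽₂ⁿ → 𝔽₂^{m_Z}. Then: (1) for all u ∈ ker(P_X), w ∈ ker(P_Z), s ∈ im(P_Zᵀ), t ∈ im(P_Xᵀ), one has (u+s)·(w+t) = u·w, so the assignment ([u],[w]) ↦ u·w is a well-defined bilinear form H₀ × H₀* → 𝔽₂; and (2) this bilinear form is a perfect pairing, i.e. its left and right kernels are trivial. -/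

import Mathlib

/-!
STATEMENT 1: For CSS parity-check matrices P_X, P_Z over 𝔽₂ with P_X·P_Zᵀ = 0,
the dot product descends to a well-defined bilinear form
H₀ × H₀* → 𝔽₂ (H₀ = ker P_X / im P_Zᵀ, H₀* = ker P_Z / im P_Xᵀ),
and this form is a perfect pairing (trivial left and right kernels).
-/

abbrev F2 := ZMod 2

open Matrix

noncomputable def dotB (n : ℕ) : (Fin n → F2) →ₗ[F2] (Fin n → F2) →ₗ[F2] F2 :=
  LinearMap.mk₂ F2 dotProduct
    (fun u v w => add_dotProduct u v w)
    (fun c u w => smul_dotProduct c u w)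
    (fun u v w => dotProduct_add u v w)
    (fun c u w => dotProduct_smul c u w)

@[simp] lemma dotB_apply {n : ℕ} (u w : Fin n → F2) : dotB n u w = u ⬝ᵥ w := rfl

lemma key {m n : ℕ} (P : Matrix (Fin m) (Fin n) F2) (u : Fin n → F2)
    (h : ∀ w ∈ LinearMap.ker P.mulVecLin, u ⬝ᵥ w = 0) :
    u ∈ LinearMap.range Pᵀ.mulVecLin := by
  have hker : LinearMap.ker P.mulVecLin ≤ LinearMap.ker (dotB n u) := fun w hw => h w hw
  let e := LinearMap.quotKerEquivRange P.mulVecLin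
  let f0 : ((Fin n → F2) ⧸ LinearMap.ker P.mulVecLin) →ₗ[F2] F2 :=
    Submodule.liftQ _ (dotB n u) hker
  let f1 : LinearMap.range P.mulVecLin →ₗ[F2] F2 := f0 ∘ₗ (e.symm : _ →ₗ[F2] _)
  obtain ⟨g, hg⟩ := LinearMap.exists_extend f1
  set v : Fin m → F2 := fun i => g (fun j => if i = j then 1 else 0) with hv
  have hgx : ∀ x : Fin m → F2, g x = x ⬝ᵥ v := by
    intro x
    rw [LinearMap.pi_apply_eq_sum_univ g x]
    simp [dotProduct, hv, smul_eq_mul]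
  have hgw : ∀ w : Fin n → F2, g (P *ᵥ w) = u ⬝ᵥ w := by
    intro w
    have h1 : (⟨P *ᵥ w, ⟨w, rfl⟩⟩ : LinearMap.range P.mulVecLin)
        = e (Submodule.Quotient.mk w) := by
      refine Subtype.ext ?_
      show P *ᵥ w = _
      rw [LinearMap.quotKerEquivRange_apply_mk, Matrix.mulVecLin_apply]
    have h2 := LinearMap.congr_fun hg ⟨P *ᵥ w, ⟨w, rfl⟩⟩
    simp only [LinearMap.coe_comp, Function.comp_apply, Submodule.coe_subtype] at h2
    rw [h2, show f1 ⟨P *ᵥ w, ⟨w, rfl⟩⟩ = f0 (e.symm ⟨P *ᵥ w, ⟨w, rfl⟩⟩) from rfl, h1]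
    simp [f1, f0, e]
  refine ⟨v, ?_⟩
  funext j
  have := hgw (Pi.single j 1)
  rw [hgx] at this
  rw [dotProduct_comm, Matrix.dotProduct_mulVec, ← Matrix.mulVec_transpose] at this
  rw [dotProduct_single_one] at this
  rw [dotProduct_single_one u j] at this
  rw [Matrix.mulVec_transpose] at this
  simpa [Matrix.mulVecLin_apply] using this

lemma ker_dot_range {m n : ℕ} (P : Matrix (Fin m) (Fin n) F2) (u t : Fin n → F2)
    (hu : u ∈ LinearMap.ker P.mulVecLin) (ht : t ∈ LinearMap.range Pᵀ.mulVecLin) :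
    u ⬝ᵥ t = 0 := by
  obtain ⟨v, rfl⟩ := ht
  rw [LinearMap.mem_ker, Matrix.mulVecLin_apply] at hu
  rw [Matrix.mulVecLin_apply, Matrix.dotProduct_mulVec, Matrix.vecMul_transpose, hu,
    zero_dotProduct]


noncomputable def liftQ₂ {M N : Type*} [AddCommGroup M] [AddCommGroup N]
    [Module F2 M] [Module F2 N]
    (p : Submodule F2 M) (q : Submodule F2 N) (f : M →ₗ[F2] N →ₗ[F2] F2)
    (hq : ∀ a : M, q ≤ LinearMap.ker (f a))
    (hp : ∀ a ∈ p, f a = 0) :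
    (M ⧸ p) →ₗ[F2] (N ⧸ q) →ₗ[F2] F2 :=
  Submodule.liftQ p
    { toFun := fun a => Submodule.liftQ q (f a) (hq a)
      map_add' := fun a b => LinearMap.ext fun x => by
        obtain ⟨w, rfl⟩ := Submodule.Quotient.mk_surjective _ x
        simp
      map_smul' := fun c a => LinearMap.ext fun x => by
        obtain ⟨w, rfl⟩ := Submodule.Quotient.mk_surjective _ x
        simp }
    (fun a ha => LinearMap.ext fun x => by
      obtain ⟨w, rfl⟩ := Submodule.Quotient.mk_surjective _ x
      simp [hp a ha])

@[simp] lemma liftQ₂_mk {M N : Type*} [AddCommGroup M] [AddCommGroup N]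
    [Module F2 M] [Module F2 N]
    (p : Submodule F2 M) (q : Submodule F2 N) (f : M →ₗ[F2] N →ₗ[F2] F2)
    (hq : ∀ a : M, q ≤ LinearMap.ker (f a))
    (hp : ∀ a ∈ p, f a = 0) (a : M) (b : N) :
    liftQ₂ p q f hq hp (Submodule.Quotient.mk a) (Submodule.Quotient.mk b) = f a b := rfl

theorem css_pairing_well_defined_and_perfect
    (n mX mZ : ℕ)
    (PX : Matrix (Fin mX) (Fin n) F2) (PZ : Matrix (Fin mZ) (Fin n) F2)
    (hcomm : PX * PZ.transpose = 0) :
    -- (1) well-definedness of the pairing on homology classes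
    (∀ u ∈ LinearMap.ker PX.mulVecLin, ∀ w ∈ LinearMap.ker PZ.mulVecLin,
      ∀ s ∈ LinearMap.range PZ.transpose.mulVecLin,
      ∀ t ∈ LinearMap.range PX.transpose.mulVecLin,
      ∑ i, (u + s) i * (w + t) i = ∑ i, u i * w i) ∧
    -- (2) the induced bilinear form on H₀ × H₀* exists and is a perfect pairing
    ∃ B : (LinearMap.ker PX.mulVecLin ⧸
            ((LinearMap.range PZ.transpose.mulVecLin).comap
              (LinearMap.ker PX.mulVecLin).subtype :
              Submodule F2 (LinearMap.ker PX.mulVecLin))) →ₗ[F2]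
          (LinearMap.ker PZ.mulVecLin ⧸
            ((LinearMap.range PX.transpose.mulVecLin).comap
              (LinearMap.ker PZ.mulVecLin).subtype :
              Submodule F2 (LinearMap.ker PZ.mulVecLin))) →ₗ[F2] F2,
      (∀ (u : LinearMap.ker PX.mulVecLin) (w : LinearMap.ker PZ.mulVecLin),
        B (Submodule.Quotient.mk u) (Submodule.Quotient.mk w) = ∑ i, (u : Fin n → F2) i * (w : Fin n → F2) i) ∧
      (∀ x, (∀ y, B x y = 0) → x = 0) ∧
      (∀ y, (∀ x, B x y = 0) → y = 0) := by
  have hrk : ∀ s ∈ LinearMap.range PZᵀ.mulVecLin, s ∈ LinearMap.ker PX.mulVecLin := by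
    rintro s ⟨a, rfl⟩
    rw [LinearMap.mem_ker, Matrix.mulVecLin_apply, Matrix.mulVecLin_apply,
      Matrix.mulVec_mulVec, hcomm, Matrix.zero_mulVec]
  constructor
  · intro u hu w hw s hs t ht
    have h1 : u ⬝ᵥ t = 0 := ker_dot_range PX u t hu ht
    have h2 : s ⬝ᵥ w = 0 := by
      rw [dotProduct_comm]; exact ker_dot_range PZ w s hw hs
    have h3 : s ⬝ᵥ t = 0 := ker_dot_range PX s t (hrk s hs) ht
    show (u + s) ⬝ᵥ (w + t) = u ⬝ᵥ w
    rw [add_dotProduct, dotProduct_add, dotProduct_add, h1, h2, h3]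
    ring
  · have hf1 : ∀ (u : LinearMap.ker PX.mulVecLin) (w : LinearMap.ker PZ.mulVecLin),
        ((dotB n).compl₁₂ (LinearMap.ker PX.mulVecLin).subtype
          (LinearMap.ker PZ.mulVecLin).subtype) u w
        = (u : Fin n → F2) ⬝ᵥ (w : Fin n → F2) := fun u w => rfl
    have hq : ∀ u : LinearMap.ker PX.mulVecLin,
        ((LinearMap.range PXᵀ.mulVecLin).comap (LinearMap.ker PZ.mulVecLin).subtype :
          Submodule F2 (LinearMap.ker PZ.mulVecLin)) ≤
        LinearMap.ker (((dotB n).compl₁₂ (LinearMap.ker PX.mulVecLin).subtype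
          (LinearMap.ker PZ.mulVecLin).subtype) u) := by
      intro u w hw
      rw [LinearMap.mem_ker, hf1]
      exact ker_dot_range PX _ _ u.2 hw
    have hp : ∀ a ∈ ((LinearMap.range PZᵀ.mulVecLin).comap
          (LinearMap.ker PX.mulVecLin).subtype :
          Submodule F2 (LinearMap.ker PX.mulVecLin)),
        ((dotB n).compl₁₂ (LinearMap.ker PX.mulVecLin).subtype
          (LinearMap.ker PZ.mulVecLin).subtype) a = 0 := by
      intro a ha
      refine LinearMap.ext fun w => ?_
      rw [hf1]
      simp only [LinearMap.zero_apply]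
      rw [dotProduct_comm]
      exact ker_dot_range PZ _ _ w.2 ha
    refine ⟨liftQ₂ _ _ _ hq hp, fun u w => rfl, ?_, ?_⟩
    · intro x hx
      obtain ⟨u, rfl⟩ := Submodule.Quotient.mk_surjective _ x
      rw [Submodule.Quotient.mk_eq_zero]
      refine key PZ u ?_
      intro w hw
      exact hx (Submodule.Quotient.mk ⟨w, hw⟩)
    · intro y hy
      obtain ⟨w, rfl⟩ := Submodule.Quotient.mk_surjective _ y
      rw [Submodule.Quotient.mk_eq_zero]
      refine key PX w ?_
      intro u hu
      rw [dotProduct_comm]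
      exact hy (Submodule.Quotient.mk ⟨u, hu⟩)
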